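/- Let n ≥ 1, let d, α ∈ ℂ, and let A_red = (a_{ij}) be an n×n complex matrix with rank(A_red) ≤ 1. Let A be the (n+1)×(n+1) complex matrix defined by: A_{1,1} = d+α, A_{1,2} = 1, A_{1,j} = 0 for 3 ≤ j ≤ n+1; A_{2,1} = a_{11}+α², A_{2,2} = d+α, A_{2,j+1} = a_{1j} for 2 ≤ j ≤ n; and for 2 ≤ i ≤ n: A_{i+1,1} = a_{i1}, A_{i+1,2} = 0, and A_{i+1,j+1} = a_{ij} + d·δ_{ij} for 2 ≤ j ≤ n. Set s = a_{22} + a_{33} + ⋯ + a_{nn} and assume 2α + s = −(n+1)d. Then the characteristic polynomial of A equals (X − d)^{n−1} · ( (X − d)² + (n+1)d·(X − d) − a_{11} − (n+1)d·s − s² ). In particular, the two eigenvalues d+z₁, d+z₂ of A other than the (n−1)-fold eigenvalue d satisfy z₁ + z₂ = −(n+1)d and z₁ z₂ = −a_{11} − (n+1)d·s − s². -/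

import Mathlib

open Matrix Polynomial

lemma rank_le_one_exists {n : ℕ} (a : Matrix (Fin n) (Fin n) ℂ) (ha : a.rank ≤ 1) :
    ∃ u v : Fin n → ℂ, ∀ i j, a i j = u i * v j := by
  have hP : (LinearMap.range a.mulVecLin).IsPrincipal :=
    (Submodule.finrank_le_one_iff_isPrincipal _).mp ha
  obtain ⟨g, hg⟩ := hP.principal
  have hcol : ∀ j : Fin n, ∃ c : ℂ, a.mulVec (Pi.single j 1) = c • g := by
    intro j
    have hmem : a.mulVec (Pi.single j 1) ∈ LinearMap.range a.mulVecLin :=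
      ⟨Pi.single j 1, rfl⟩
    rw [hg, Submodule.mem_span_singleton] at hmem
    obtain ⟨c, hc⟩ := hmem
    exact ⟨c, hc.symm⟩
  choose cv hcv using hcol
  refine ⟨g, cv, fun i j => ?_⟩
  have h2 := congrFun (hcv j) i
  simp only [Matrix.mulVec_single, Pi.smul_apply, smul_eq_mul, Matrix.col_apply, MulOpposite.op_one, one_smul] at h2
  linear_combination h2

lemma eval_charpoly' {m : ℕ} (M : Matrix (Fin m) (Fin m) ℂ) (x : ℂ) :
    M.charpoly.eval x = (x • (1 : Matrix (Fin m) (Fin m) ℂ) - M).det := by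
  rw [Matrix.charpoly, eval_det, matPolyEquiv_charmatrix]
  congr 1
  rw [eval_sub, eval_X, eval_C]
  congr 1
  ext i j
  by_cases h : i = j <;> simp [Matrix.scalar, Matrix.one_apply, h]

theorem slice_charpoly (n : ℕ) (hn : 1 ≤ n) (d α : ℂ)
    (a : Matrix (Fin n) (Fin n) ℂ) (ha : a.rank ≤ 1)
    (A : Matrix (Fin (n + 1)) (Fin (n + 1)) ℂ)
    (h00 : A ⟨0, by omega⟩ ⟨0, by omega⟩ = d + α)
    (h01 : A ⟨0, by omega⟩ ⟨1, by omega⟩ = 1)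
    (h0j : ∀ j : Fin (n + 1), 2 ≤ (j : ℕ) → A ⟨0, by omega⟩ j = 0)
    (h10 : A ⟨1, by omega⟩ ⟨0, by omega⟩ = a ⟨0, by omega⟩ ⟨0, by omega⟩ + α ^ 2)
    (h11 : A ⟨1, by omega⟩ ⟨1, by omega⟩ = d + α)
    (h1j : ∀ j : Fin n, 1 ≤ (j : ℕ) → A ⟨1, by omega⟩ j.succ = a ⟨0, by omega⟩ j)
    (hi0 : ∀ i : Fin n, 1 ≤ (i : ℕ) → A i.succ ⟨0, by omega⟩ = a i ⟨0, by omega⟩)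
    (hi1 : ∀ i : Fin n, 1 ≤ (i : ℕ) → A i.succ ⟨1, by omega⟩ = 0)
    (hij : ∀ i j : Fin n, 1 ≤ (i : ℕ) → 1 ≤ (j : ℕ) →
      A i.succ j.succ = a i j + (if i = j then d else 0))
    (s : ℂ)
    (hs : s = ∑ i ∈ Finset.univ.filter (fun i : Fin n => 1 ≤ (i : ℕ)), a i i)
    (htr : 2 * α + s = -((n : ℂ) + 1) * d) :
    A.charpoly =
        (X - C d) ^ (n - 1) *
          ((X - C d) ^ 2 + C (((n : ℂ) + 1) * d) * (X - C d)
            - C (a ⟨0, by omega⟩ ⟨0, by omega⟩ + ((n : ℂ) + 1) * d * s + s ^ 2)) ∧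
      ∃ z₁ z₂ : ℂ,
        z₁ + z₂ = -((n : ℂ) + 1) * d ∧
        z₁ * z₂ = -(a ⟨0, by omega⟩ ⟨0, by omega⟩) - ((n : ℂ) + 1) * d * s - s ^ 2 ∧
        A.charpoly = (X - C d) ^ (n - 1) *
          (X - C (d + z₁)) * (X - C (d + z₂)) := by
  obtain ⟨u, v, huv⟩ := rank_le_one_exists a ha
  have hn0 : 0 < n := hn
  set i0 : Fin n := ⟨0, hn0⟩ with hi0def
  set a00 : ℂ := a ⟨0, by omega⟩ ⟨0, by omega⟩ with ha00def
  have ha00 : a00 = u i0 * v i0 := huv _ _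
  -- the rank-two decomposition vectors
  set w : Fin (n + 1) → ℂ := Fin.cases 0 u with hw
  set v' : Fin (n + 1) → ℂ :=
    Fin.cases (v i0) (fun j => if (j : ℕ) = 0 then 0 else v j) with hv'
  set cc : Fin (n + 1) → ℂ :=
    Fin.cases 1 (fun i => if (i : ℕ) = 0 then α else 0) with hcc
  set rr : Fin (n + 1) → ℂ :=
    Fin.cases α (fun i => if (i : ℕ) = 0 then 1 else 0) with hrr
  set U : Matrix (Fin (n + 1)) (Fin 2) ℂ :=
    Matrix.of (fun k t => if t = 0 then w k else cc k) with hU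
  set W : Matrix (Fin 2) (Fin (n + 1)) ℂ :=
    Matrix.of (fun t l => if t = 0 then v' l else rr l) with hW
  -- component facts
  have hw0 : w 0 = 0 := rfl
  have hws : ∀ i : Fin n, w i.succ = u i := fun i => rfl
  have hv0 : v' 0 = v i0 := rfl
  have hvs : ∀ j : Fin n, v' j.succ = if (j : ℕ) = 0 then 0 else v j := fun j => rfl
  have hc0 : cc 0 = 1 := rfl
  have hcs : ∀ i : Fin n, cc i.succ = if (i : ℕ) = 0 then α else 0 := fun i => rfl
  have hr0 : rr 0 = α := rfl
  have hrs : ∀ i : Fin n, rr i.succ = if (i : ℕ) = 0 then 1 else 0 := fun i => rfl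
  -- A entrywise
  have hA : ∀ k l : Fin (n + 1),
      A k l = d * (if k = l then 1 else 0) + (w k * v' l + cc k * rr l) := by
    intro k l
    induction k using Fin.cases with
    | zero =>
      induction l using Fin.cases with
      | zero =>
        have hL : A 0 0 = d + α := by convert h00 using 2 <;> (ext; simp)
        rw [hL, hw0, hv0, hc0, hr0]
        simp
      | succ j =>
        by_cases hj : (j : ℕ) = 0
        · have hL : A 0 j.succ = 1 := by
            convert h01 using 2 <;> (ext; simp [hj])
          rw [hL, hw0, hc0, hrs]
          simp [(Fin.succ_ne_zero j).symm, hj]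
        · have hL : A 0 j.succ = 0 := by
            convert h0j j.succ (by simp [Fin.val_succ]; omega) using 2 <;> (ext; simp)
          rw [hL, hw0, hc0, hrs]
          simp [(Fin.succ_ne_zero j).symm, hj]
    | succ i =>
      induction l using Fin.cases with
      | zero =>
        by_cases hi : (i : ℕ) = 0
        · have hL : A i.succ 0 = a00 + α ^ 2 := by
            convert h10 using 2 <;> (ext; simp [hi])
          have ei : i = i0 := Fin.ext (by simp [hi, hi0def])
          rw [hL, hws, hv0, hcs, hr0, ei, ha00]
          simp [Fin.ext_iff, hi0def]
          ring
        · have hL : A i.succ 0 = a i i0 := by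
            convert hi0 i (by omega) using 2 <;> (ext; simp)
          rw [hL, hws, hv0, hcs, hr0, huv i i0]
          simp [Fin.ext_iff, hi]
      | succ j =>
        by_cases hi : (i : ℕ) = 0
        · by_cases hj : (j : ℕ) = 0
          · have hL : A i.succ j.succ = d + α := by
              convert h11 using 2 <;> (ext; simp [hi, hj])
            rw [hL, hws, hvs, hcs, hrs]
            simp [Fin.ext_iff, hi, hj]
          · have ei : i = i0 := Fin.ext (by simp [hi, hi0def])
            have hL : A i.succ j.succ = a i0 j := by
              convert h1j j (by omega) using 2
              ext; simp [hi]
            rw [hL, hws, hvs, hcs, hrs, ei, huv i0 j]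
            simp [Fin.ext_iff, hi0def, hj]
        · by_cases hj : (j : ℕ) = 0
          · have hL : A i.succ j.succ = 0 := by
              convert hi1 i (by omega) using 2
              ext; simp [hj]
            rw [hL, hws, hvs, hcs, hrs]
            simp [Fin.ext_iff, hi, hj]
          · have hL := hij i j (by omega) (by omega)
            rw [hL, hws, hvs, hcs, hrs, huv i j]
            by_cases e : i = j
            · subst e
              simp [hi]
              ring
            · have hne : ¬ ((i : ℕ) = (j : ℕ)) := fun h => e (Fin.ext h)
              simp [Fin.ext_iff, hi, hj, e, hne]
  -- the four inner products
  have S00 : ∑ k, v' k * w k = s := by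
    rw [Fin.sum_univ_succ, hs, Finset.sum_filter]
    simp only [hv0, hw0, hvs, hws, mul_zero, zero_add]
    apply Finset.sum_congr rfl
    intro i _
    by_cases hi : (i : ℕ) = 0
    · have h1 : ¬ (1 ≤ (i : ℕ)) := by omega
      simp [hi, h1]
    · have h1 : 1 ≤ (i : ℕ) := by omega
      simp [hi, h1, huv i i]
      ring
  have S01 : ∑ k, v' k * cc k = v i0 := by
    have hz : ∀ j : Fin n, v' j.succ * cc j.succ = 0 := by
      intro j
      by_cases hj : (j : ℕ) = 0 <;> simp [hvs, hcs, hj]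
    rw [Fin.sum_univ_succ]
    simp [hv0, hc0, hz]
  have S10 : ∑ k, rr k * w k = u i0 := by
    have hterm : ∀ i : Fin n, rr i.succ * w i.succ = if i = i0 then u i0 else 0 := by
      intro i
      by_cases hi : (i : ℕ) = 0
      · have e : i = i0 := Fin.ext (by simp [hi, hi0def])
        simp [hrs, hws, hi, e, show (i0 : ℕ) = 0 from rfl]
      · have e : ¬ (i = i0) := fun h => hi (by simp [h, hi0def])
        simp [hrs, hws, hi, e]
    rw [Fin.sum_univ_succ]
    simp [hr0, hw0, hterm]
  have S11 : ∑ k, rr k * cc k = 2 * α := by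
    have hterm : ∀ i : Fin n, rr i.succ * cc i.succ = if i = i0 then α else 0 := by
      intro i
      by_cases hi : (i : ℕ) = 0
      · have e : i = i0 := Fin.ext (by simp [hi, hi0def])
        simp [hrs, hcs, hi, e, show (i0 : ℕ) = 0 from rfl]
      · have e : ¬ (i = i0) := fun h => hi (by simp [h, hi0def])
        simp [hrs, hcs, hi, e]
    rw [Fin.sum_univ_succ]
    simp [hr0, hc0, hterm]
    ring
  have hα : 2 * α = -((n : ℂ) + 1) * d - s := by linear_combination htr
  have main : A.charpoly =
      (X - C d) ^ (n - 1) *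
        ((X - C d) ^ 2 + C (((n : ℂ) + 1) * d) * (X - C d)
          - C (a00 + ((n : ℂ) + 1) * d * s + s ^ 2)) := by
    apply Polynomial.eq_of_infinite_eval_eq
    refine Set.Infinite.mono ?_ ((Set.finite_singleton d).infinite_compl)
    intro x hx
    have hxd : x ≠ d := hx
    have hy : x - d ≠ 0 := sub_ne_zero.mpr hxd
    simp only [Set.mem_setOf_eq]
    rw [eval_charpoly']
    set y : ℂ := x - d with hydef
    have hUW : ∀ k l, (((-y⁻¹) • U) * W) k l
        = -y⁻¹ * (w k * v' l) + -y⁻¹ * (cc k * rr l) := by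
      intro k l
      rw [Matrix.mul_apply, Fin.sum_univ_two]
      simp [hU, hW]
      ring
    have hAM : x • (1 : Matrix (Fin (n + 1)) (Fin (n + 1)) ℂ) - A
        = y • (1 + ((-y⁻¹) • U) * W) := by
      ext k l
      simp only [Matrix.sub_apply, Matrix.smul_apply, Matrix.add_apply, Matrix.one_apply,
        smul_eq_mul, hUW, hA k l]
      by_cases e : k = l <;> simp [e] <;> field_simp <;> ring
    rw [hAM, Matrix.det_smul, Matrix.det_one_add_mul_comm, Matrix.det_fin_two]
    have hent : ∀ t t' : Fin 2, (W * ((-y⁻¹) • U)) t t'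
        = -y⁻¹ * ∑ k, (if t = 0 then v' k else rr k) * (if t' = 0 then w k else cc k) := by
      intro t t'
      rw [Matrix.mul_apply, Finset.mul_sum]
      apply Finset.sum_congr rfl
      intro k _
      by_cases h1 : t = 0 <;> by_cases h2 : t' = 0 <;>
        simp [hW, hU, h1, h2] <;> ring
    simp only [Matrix.add_apply, Matrix.one_apply, hent]
    norm_num
    rw [S00, S01, S10, S11]
    have hpow : y ^ (n + 1) = y ^ (n - 1) * y ^ 2 := by
      rw [← pow_add]
      congr 1
      omega
    rw [hpow, mul_assoc, ← hydef]
    congr 1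
    field_simp
    ring_nf
    linear_combination (s - (x - d)) * htr + ha00
  obtain ⟨D, hD⟩ := IsAlgClosed.exists_pow_nat_eq (k := ℂ)
    ((((n : ℂ) + 1) * d) ^ 2 - 4 * (-(a00) - ((n : ℂ) + 1) * d * s - s ^ 2))
    (n := 2) (by norm_num)
  refine ⟨main, (-(((n : ℂ) + 1) * d) + D) / 2, (-(((n : ℂ) + 1) * d) - D) / 2,
    by ring, ?_, ?_⟩
  · linear_combination (-(1 : ℂ)/4) * hD
  · have hfac : (X - C d) ^ 2 + C (((n : ℂ) + 1) * d) * (X - C d)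
        - C (a00 + ((n : ℂ) + 1) * d * s + s ^ 2)
        = (X - C (d + (-(((n : ℂ) + 1) * d) + D) / 2))
          * (X - C (d + (-(((n : ℂ) + 1) * d) - D) / 2)) := by
      apply Polynomial.funext
      intro r
      simp only [eval_mul, eval_sub, eval_add, eval_pow, eval_X, eval_C]
      linear_combination ((1 : ℂ)/4) * hD
    rw [main, hfac, ← mul_assoc]
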